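/- arXiv:2311.06597 — 7 statements merged into one kernel-verified Lean document; each statement's English description precedes it below -/
import Mathlib

section
/- Let f : ℝ^d → ℝ^k be differentiable with L-Lipschitz total derivative (L ≥ 0), let (x_1,y_1),…,(x_n,y_n) with n ≥ 1 be training samples with x_i ∈ ℝ^d and labels y_i ∈ {1,…,k} such that f interpolates the one-hot labels, i.e. f(x_i) = e_{y_i} for every i, and suppose B ≥ 0 satisfies (1/n)·∑_{i=1}^n ‖Df(x_i)‖_op² ≤ B. Set ε = min{1, 1/(2(√(nB) + L))}. Let T be a finite set of test pairs (x′, y′) ∈ ℝ^d × {1,…,k} and let 0 ≤ δ ≤ 1. If at least δ·|T| of the pairs (x′,y′) ∈ T admit an index i with y_i = y′ and ‖x′ − x_i‖₂ ≤ ε, then at least δ·|T| of the pairs (x′,y′) ∈ T are correctly classified by f, i.e. satisfy f(x′)_j ≤ f(x′)_{y′} for every coordinate j. -/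
open scoped Classical

lemma coord_abs_le_norm {k : ℕ} (v : EuclideanSpace ℝ (Fin k)) (j : Fin k) :
    |v j| ≤ ‖v‖ := by
  rw [EuclideanSpace.norm_eq]
  have h1 : |v j| = Real.sqrt (|v j| ^ 2) := by
    rw [Real.sqrt_sq (abs_nonneg _)]
  rw [h1]
  apply Real.sqrt_le_sqrt
  have := Finset.single_le_sum (f := fun i => ‖v i‖ ^ 2)
    (fun i _ => sq_nonneg _) (Finset.mem_univ j)
  simpa [Real.norm_eq_abs] using this

/-- If `f` interpolates the one-hot training labels, has `L`-Lipschitz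
total derivative, and the average squared operator norm of its derivative at the
training points is at most `B`, then any fraction `δ` of test pairs admitting a
training neighbour of the same label within distance `ε = min 1 (1/(2(√(nB)+L)))`
is correctly classified. -/
theorem statement0 {d k n : ℕ} (hn : 1 ≤ n)
    (f : EuclideanSpace ℝ (Fin d) → EuclideanSpace ℝ (Fin k))
    (L : ℝ) (hL : 0 ≤ L)
    (hf : Differentiable ℝ f)
    (hlip : ∀ u v, ‖fderiv ℝ f u - fderiv ℝ f v‖ ≤ L * ‖u - v‖)
    (x : Fin n → EuclideanSpace ℝ (Fin d)) (y : Fin n → Fin k)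
    (hinterp : ∀ i, f (x i) = EuclideanSpace.single (y i) 1)
    (B : ℝ) (hB0 : 0 ≤ B)
    (hB : (1 / (n : ℝ)) * ∑ i, ‖fderiv ℝ f (x i)‖ ^ 2 ≤ B)
    (ε : ℝ) (hε : ε = min 1 (1 / (2 * (Real.sqrt ((n : ℝ) * B) + L))))
    (T : Finset (EuclideanSpace ℝ (Fin d) × Fin k))
    (δ : ℝ) (hδ0 : 0 ≤ δ) (hδ1 : δ ≤ 1)
    (hcover : δ * T.card ≤
      (T.filter (fun p => ∃ i, y i = p.2 ∧ ‖p.1 - x i‖ ≤ ε)).card) :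
    δ * T.card ≤
      (T.filter (fun p => ∀ j, f p.1 j ≤ f p.1 p.2)).card := by
  have hnpos : (0 : ℝ) < n := by exact_mod_cast hn
  set C : ℝ := Real.sqrt ((n : ℝ) * B) + L with hC
  have hC0 : 0 ≤ C := add_nonneg (Real.sqrt_nonneg _) hL
  -- derivative bound at training points
  have hderiv : ∀ i, ‖fderiv ℝ f (x i)‖ ≤ Real.sqrt ((n : ℝ) * B) := by
    intro i
    have hsum : ∑ j, ‖fderiv ℝ f (x j)‖ ^ 2 ≤ (n : ℝ) * B := by
      rw [one_div, inv_mul_le_iff₀ hnpos] at hB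
      linarith
    have hterm : ‖fderiv ℝ f (x i)‖ ^ 2 ≤ (n : ℝ) * B :=
      le_trans (Finset.single_le_sum (f := fun j => ‖fderiv ℝ f (x j)‖ ^ 2)
        (fun j _ => sq_nonneg _) (Finset.mem_univ i)) hsum
    have := Real.sqrt_le_sqrt hterm
    rwa [Real.sqrt_sq (norm_nonneg _)] at this
  -- key pointwise claim
  have key : ∀ p ∈ T, (∃ i, y i = p.2 ∧ ‖p.1 - x i‖ ≤ ε) →
      ∀ j, f p.1 j ≤ f p.1 p.2 := by
    rintro ⟨x', y'⟩ _ ⟨i, hyi, hdist⟩ j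
    simp only at hyi hdist ⊢
    have hεle1 : ε ≤ 1 := by rw [hε]; exact min_le_left _ _
    -- show ‖f x' - f (x i)‖ ≤ 1/2
    have hnorm : ‖f x' - f (x i)‖ ≤ 1 / 2 := by
      rcases eq_or_lt_of_le hC0 with hC0' | hCpos
      · -- C = 0 : then ε = 0, so x' = x i
        have : ε = 0 := by
          rw [hε, ← hC0', mul_zero, div_zero]
          simp
        have hx : x' = x i := by
          have : ‖x' - x i‖ ≤ 0 := by rw [this] at hdist; exact hdist
          have := le_antisymm this (norm_nonneg _)
          rwa [norm_sub_eq_zero_iff] at this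
        rw [hx]; simp
      · have hε0 : 0 ≤ ε := by
          rw [hε]
          exact le_min zero_le_one (by positivity)
        have hεC : ε ≤ 1 / (2 * C) := by rw [hε]; exact min_le_right _ _
        -- derivative bound on closed ball of radius ε around x i
        have hbound : ∀ z ∈ Metric.closedBall (x i) ε, ‖fderiv ℝ f z‖ ≤ C := by
          intro z hz
          rw [Metric.mem_closedBall, dist_eq_norm] at hz
          calc ‖fderiv ℝ f z‖ ≤ ‖fderiv ℝ f (x i)‖ + ‖fderiv ℝ f z - fderiv ℝ f (x i)‖ := by
                have := norm_sub_norm_le (fderiv ℝ f z) (fderiv ℝ f (x i))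
                linarith [norm_sub_norm_le (fderiv ℝ f z) (fderiv ℝ f (x i))]
            _ ≤ Real.sqrt ((n : ℝ) * B) + L * ‖z - x i‖ :=
                add_le_add (hderiv i) (hlip z (x i))
            _ ≤ Real.sqrt ((n : ℝ) * B) + L * 1 := by
                have : ‖z - x i‖ ≤ 1 := le_trans hz hεle1
                nlinarith
            _ = C := by rw [hC, mul_one]
        have hmv := (convex_closedBall (x i) ε).norm_image_sub_le_of_norm_fderiv_le
          (fun z _ => hf z) hbound (Metric.mem_closedBall_self hε0)
          (by rw [Metric.mem_closedBall, dist_eq_norm]; exact hdist)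
        calc ‖f x' - f (x i)‖ ≤ C * ‖x' - x i‖ := hmv
          _ ≤ C * (1 / (2 * C)) := by
              apply mul_le_mul_of_nonneg_left (le_trans hdist hεC) hC0
          _ = 1 / 2 := by field_simp
    -- conclude coordinatewise
    have hcoord : ∀ j', |f x' j' - f (x i) j'| ≤ 1 / 2 := by
      intro j'
      have := coord_abs_le_norm (f x' - f (x i)) j'
      simpa using le_trans this hnorm
    have h1 := hcoord j
    have h2 := hcoord y'
    rw [hinterp i, hyi] at h1 h2
    rcases eq_or_ne j y' with rfl | hj
    · exact le_refl _
    · have hsj : EuclideanSpace.single y' (1 : ℝ) j = 0 := by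
        rw [EuclideanSpace.single_apply, if_neg hj]
      have hsy : EuclideanSpace.single y' (1 : ℝ) y' = 1 := by
        rw [EuclideanSpace.single_apply, if_pos rfl]
      rw [hsj] at h1; rw [hsy] at h2
      obtain ⟨ha, hb⟩ := abs_le.mp h1
      obtain ⟨hc, hd⟩ := abs_le.mp h2
      linarith
  -- finish via subset of filters
  refine le_trans hcover ?_
  have hsub : T.filter (fun p => ∃ i, y i = p.2 ∧ ‖p.1 - x i‖ ≤ ε) ⊆
      T.filter (fun p => ∀ j, f p.1 j ≤ f p.1 p.2) := by
    intro p hp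
    rw [Finset.mem_filter] at hp ⊢
    exact ⟨hp.1, key p hp.1 hp.2⟩
  exact_mod_cast Nat.cast_le.mpr (Finset.card_le_card hsub)
end

section
/- Let f : ℝ^d → ℝ^k be differentiable with L-Lipschitz total derivative where L ≥ 1/2, let (x_1,y_1),…,(x_n,y_n) with n ≥ 1 be training samples such that f(x_i) = e_{y_i} for every i, let a, b ∈ ℝ and t ≥ 1 (the number of training steps), and suppose (1/n)·∑_{i=1}^n ‖Df(x_i)‖_op² ≤ (max{a − b·log₁₀ t, 0})²/(4n). Let T be a finite set of test pairs and 0 ≤ δ ≤ 1. If at least δ·|T| of the pairs (x′,y′) ∈ T admit an index i with y_i = y′ and ‖x′ − x_i‖₂ ≤ 1/(2L + max{a − b·log₁₀ t, 0}), then at least δ·|T| of the pairs (x′,y′) ∈ T satisfy f(x′)_j ≤ f(x′)_{y′} for every coordinate j. -/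
open scoped Classical

/-- phase-transition corollary with the weight-norm/sharpness bound
`max(a - b·log₁₀ t, 0)² / (4n)` and neighbourhood radius
`1/(2L + max(a - b·log₁₀ t, 0))`. -/
theorem statement1 {d k n : ℕ} (hn : 1 ≤ n)
    (f : EuclideanSpace ℝ (Fin d) → EuclideanSpace ℝ (Fin k))
    (L : ℝ) (hL : (1 : ℝ) / 2 ≤ L)
    (hf : Differentiable ℝ f)
    (hlip : ∀ u v, ‖fderiv ℝ f u - fderiv ℝ f v‖ ≤ L * ‖u - v‖)
    (x : Fin n → EuclideanSpace ℝ (Fin d)) (y : Fin n → Fin k)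
    (hinterp : ∀ i, f (x i) = EuclideanSpace.single (y i) 1)
    (a b t : ℝ) (ht : 1 ≤ t)
    (hB : (1 / (n : ℝ)) * ∑ i, ‖fderiv ℝ f (x i)‖ ^ 2 ≤
      (max (a - b * Real.logb 10 t) 0) ^ 2 / (4 * (n : ℝ)))
    (T : Finset (EuclideanSpace ℝ (Fin d) × Fin k))
    (δ : ℝ) (hδ0 : 0 ≤ δ) (hδ1 : δ ≤ 1)
    (hcover : δ * T.card ≤
      (T.filter (fun p => ∃ i, y i = p.2 ∧
        ‖p.1 - x i‖ ≤ 1 / (2 * L + max (a - b * Real.logb 10 t) 0))).card) :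
    δ * T.card ≤
      (T.filter (fun p => ∀ j, f p.1 j ≤ f p.1 p.2)).card := by
  set M : ℝ := max (a - b * Real.logb 10 t) 0 with hM
  have hM0 : 0 ≤ M := le_max_right _ _
  have hLpos : (0:ℝ) < L := by linarith
  have hs : (1:ℝ) ≤ 2 * L + M := by linarith
  have hspos : (0:ℝ) < 2 * L + M := by linarith
  set r : ℝ := 1 / (2 * L + M) with hr
  have hrpos : 0 < r := by positivity
  have hnpos : (0:ℝ) < n := by exact_mod_cast hn
  -- per-training-point derivative bound
  have hsum : ∑ i, ‖fderiv ℝ f (x i)‖ ^ 2 ≤ M ^ 2 / 4 := by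
    have := hB
    rw [one_div, inv_mul_le_iff₀ hnpos] at this
    calc ∑ i, ‖fderiv ℝ f (x i)‖ ^ 2 ≤ n * (M ^ 2 / (4 * n)) := this
      _ = M ^ 2 / 4 := by field_simp
  have hderiv : ∀ i, ‖fderiv ℝ f (x i)‖ ≤ M / 2 := by
    intro i
    have h1 : ‖fderiv ℝ f (x i)‖ ^ 2 ≤ M ^ 2 / 4 :=
      le_trans (Finset.single_le_sum (f := fun i => ‖fderiv ℝ f (x i)‖ ^ 2) (fun i _ => sq_nonneg _) (Finset.mem_univ i)) hsum
    nlinarith [norm_nonneg (fderiv ℝ f (x i))]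
  -- key implication
  have key : ∀ p ∈ T, (∃ i, y i = p.2 ∧ ‖p.1 - x i‖ ≤ r) →
      ∀ j, f p.1 j ≤ f p.1 p.2 := by
    rintro ⟨x', y'⟩ _ ⟨i, hyi, hdist⟩ j
    simp only at hyi hdist ⊢
    subst hyi
    -- bound ‖f x' - f (x i)‖
    have hC : ∀ w ∈ Metric.closedBall (x i) r, ‖fderiv ℝ f w‖ ≤ M / 2 + L * r := by
      intro w hw
      have h1 : ‖fderiv ℝ f w - fderiv ℝ f (x i)‖ ≤ L * ‖w - x i‖ := hlip w (x i)
      have h2 : ‖w - x i‖ ≤ r := by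
        rwa [Metric.mem_closedBall, dist_eq_norm] at hw
      calc ‖fderiv ℝ f w‖ ≤ ‖fderiv ℝ f (x i)‖ + ‖fderiv ℝ f w - fderiv ℝ f (x i)‖ := by
            have := norm_sub_norm_le (fderiv ℝ f w) (fderiv ℝ f (x i)); linarith
        _ ≤ M / 2 + L * r := by
            have := hderiv i
            have : L * ‖w - x i‖ ≤ L * r := by
              exact mul_le_mul_of_nonneg_left h2 hLpos.le
            linarith [hderiv i, hlip w (x i)]
    have hmem : x' ∈ Metric.closedBall (x i) r := by
      rwa [Metric.mem_closedBall, dist_eq_norm]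
    have hmem0 : x i ∈ Metric.closedBall (x i) r := Metric.mem_closedBall_self hrpos.le
    have hbound : ‖f x' - f (x i)‖ ≤ (M / 2 + L * r) * ‖x' - x i‖ :=
      (convex_closedBall (x i) r).norm_image_sub_le_of_norm_fderiv_le
        (fun w _ => hf w)
        hC hmem0 hmem
    have hB' : ‖f x' - f (x i)‖ ≤ (M / 2 + L * r) * r := by
      refine hbound.trans ?_
      have : (0:ℝ) ≤ M / 2 + L * r := by positivity
      exact mul_le_mul_of_nonneg_left hdist this
    have hhalf : (M / 2 + L * r) * r ≤ 1 / 2 := by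
      have hkey : 1 / 2 - (M / 2 + L * r) * r = L * (2 * L + M - 1) / (2 * L + M) ^ 2 := by
        rw [hr]; field_simp; ring
      have hpos : 0 ≤ L * (2 * L + M - 1) / (2 * L + M) ^ 2 :=
        div_nonneg (mul_nonneg hLpos.le (by linarith)) (by positivity)
      linarith
    have hBhalf : ‖f x' - f (x i)‖ ≤ 1 / 2 := hB'.trans hhalf
    have hcoord : ∀ j', |f x' j' - f (x i) j'| ≤ 1 / 2 := by
      intro j'
      have := coord_abs_le_norm (f x' - f (x i)) j'
      simp only [PiLp.sub_apply] at this
      linarith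
    have hfx := hinterp i
    have hyval : f (x i) (y i) = 1 := by
      rw [hfx, EuclideanSpace.single_apply]; simp
    by_cases hj : j = y i
    · subst hj; exact le_refl _
    · have hjval : f (x i) j = 0 := by
        rw [hfx, EuclideanSpace.single_apply]; simp [hj]
      have h1 := abs_le.mp (hcoord j)
      have h2 := abs_le.mp (hcoord (y i))
      rw [hjval] at h1
      rw [hyval] at h2
      linarith [h1.2, h2.1]
  refine le_trans hcover ?_
  have : (T.filter (fun p => ∃ i, y i = p.2 ∧ ‖p.1 - x i‖ ≤ r)) ⊆
      T.filter (fun p => ∀ j, f p.1 j ≤ f p.1 p.2) := by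
    intro p hp
    rw [Finset.mem_filter] at hp ⊢
    exact ⟨hp.1, key p hp.1 hp.2⟩
  exact_mod_cast Finset.card_le_card this
end

section
/- Let f : ℝ^d → ℝ^k be differentiable with L-Lipschitz total derivative (L ≥ 0), let (x_1,y_1),…,(x_n,y_n) with n ≥ 1 be training samples, each x_i ≠ 0, such that f(x_i) = e_{y_i} for every i. Let W be a real m×p matrix and S ≥ 0 a real number such that (1/n)·∑_{i=1}^n ‖Df(x_i)‖_op² ≤ (∑_{r,s} W_{rs}²)·S / min_i ‖x_i‖₂². Set ε̂ = min{1, 1/(2(√(n·(∑_{r,s} |W_{rs}|)²·S / min_i ‖x_i‖₂²) + L))}. Let T be a finite set of test pairs and 0 ≤ δ ≤ 1. If at least δ·|T| of the pairs (x′,y′) ∈ T admit an index i with y_i = y′ and ‖x′ − x_i‖₂ ≤ ε̂, then at least δ·|T| of the pairs (x′,y′) ∈ T satisfy f(x′)_j ≤ f(x′)_{y′} for every coordinate j. -/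
open scoped Classical

/-- Coordinate bound in Euclidean space. -/
lemma coord_le_norm {k : ℕ} (a : EuclideanSpace ℝ (Fin k)) (j : Fin k) :
    |a j| ≤ ‖a‖ := by
  rw [EuclideanSpace.norm_eq]
  have h1 : |a j| = Real.sqrt (‖a j‖ ^ 2) := by
    rw [Real.sqrt_sq_eq_abs]; simp
  rw [h1]
  apply Real.sqrt_le_sqrt
  exact Finset.single_le_sum (f := fun i => ‖a i‖ ^ 2)
    (fun i _ => by positivity) (Finset.mem_univ j)

/-- Taylor-type bound for a function with Lipschitz derivative. -/
lemma taylor_bound {E F : Type*} [NormedAddCommGroup E] [NormedSpace ℝ E]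
    [NormedAddCommGroup F] [NormedSpace ℝ F]
    (f : E → F) (hf : Differentiable ℝ f) (L : ℝ) (hL : 0 ≤ L)
    (hlip : ∀ u v, ‖fderiv ℝ f u - fderiv ℝ f v‖ ≤ L * ‖u - v‖)
    (u v : E) : ‖f u - f v - fderiv ℝ f v (u - v)‖ ≤ L * ‖u - v‖ ^ 2 := by
  set g : E → F := fun w => f w - fderiv ℝ f v w with hg
  have hgd : ∀ w, DifferentiableAt ℝ g w := fun w =>
    (hf w).sub ((fderiv ℝ f v).differentiable w)
  have hgderiv : ∀ w, fderiv ℝ g w = fderiv ℝ f w - fderiv ℝ f v := by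
    intro w
    rw [fderiv_fun_sub (hf w) ((fderiv ℝ f v).differentiable w),
      (fderiv ℝ f v).fderiv]
  have key : ‖g u - g v‖ ≤ (L * ‖u - v‖) * ‖u - v‖ := by
    apply (convex_closedBall v ‖u - v‖).norm_image_sub_le_of_norm_fderiv_le
      (fun w _ => hgd w) ?_ (Metric.mem_closedBall_self (norm_nonneg _)) ?_
    · intro w hw
      rw [hgderiv w]
      calc ‖fderiv ℝ f w - fderiv ℝ f v‖ ≤ L * ‖w - v‖ := hlip w v
        _ ≤ L * ‖u - v‖ := by
            have hwv : ‖w - v‖ ≤ ‖u - v‖ := by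
              have := hw
              rw [Metric.mem_closedBall, dist_eq_norm] at this
              exact this
            nlinarith
    · simp [Metric.mem_closedBall, dist_eq_norm]
  have hgu : g u - g v = f u - f v - fderiv ℝ f v (u - v) := by
    simp only [hg, map_sub]
    abel
  rw [hgu] at key
  calc ‖f u - f v - fderiv ℝ f v (u - v)‖ ≤ (L * ‖u - v‖) * ‖u - v‖ := key
    _ = L * ‖u - v‖ ^ 2 := by ring

set_option maxHeartbeats 1000000 in
/-- the `l₁`-decay corollary. With the average squared derivative
norm bounded by `‖W‖_F² · S / min_i ‖x_i‖₂²`, a fraction `δ` of the test pairs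
having a same-label training neighbour within distance
`ε̂ = min 1 (1/(2(√(n·‖W‖₁²·S/min_i‖x_i‖₂²) + L)))` is correctly classified. -/
theorem statement4 {d k n m p : ℕ} (hn : 1 ≤ n)
    (f : EuclideanSpace ℝ (Fin d) → EuclideanSpace ℝ (Fin k))
    (L : ℝ) (hL : 0 ≤ L)
    (hf : Differentiable ℝ f)
    (hlip : ∀ u v, ‖fderiv ℝ f u - fderiv ℝ f v‖ ≤ L * ‖u - v‖)
    (x : Fin n → EuclideanSpace ℝ (Fin d)) (y : Fin n → Fin k)
    (hx : ∀ i, x i ≠ 0)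
    (hinterp : ∀ i, f (x i) = EuclideanSpace.single (y i) 1)
    (W : Matrix (Fin m) (Fin p) ℝ) (S : ℝ) (hS : 0 ≤ S)
    (hB : (1 / (n : ℝ)) * ∑ i, ‖fderiv ℝ f (x i)‖ ^ 2 ≤
      (∑ r, ∑ s, (W r s) ^ 2) * S / ⨅ i, ‖x i‖ ^ 2)
    (ε : ℝ) (hε : ε = min 1 (1 / (2 * (Real.sqrt
      ((n : ℝ) * (∑ r, ∑ s, |W r s|) ^ 2 * S / ⨅ i, ‖x i‖ ^ 2) + L))))
    (T : Finset (EuclideanSpace ℝ (Fin d) × Fin k))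
    (δ : ℝ) (hδ0 : 0 ≤ δ) (hδ1 : δ ≤ 1)
    (hcover : δ * T.card ≤
      (T.filter (fun q => ∃ i, y i = q.2 ∧ ‖q.1 - x i‖ ≤ ε)).card) :
    δ * T.card ≤
      (T.filter (fun q => ∀ j, f q.1 j ≤ f q.1 q.2)).card := by
  haveI : Nonempty (Fin n) := ⟨⟨0, hn⟩⟩
  set M : ℝ := ⨅ i, ‖x i‖ ^ 2 with hM
  have hM_le : ∀ i, M ≤ ‖x i‖ ^ 2 := fun i =>
    ciInf_le (Set.Finite.bddBelow (Set.finite_range _)) i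
  have hMpos : 0 < M := by
    obtain ⟨i0, hi0⟩ := Finite.exists_min (fun i => ‖x i‖ ^ 2)
    have h1 : ‖x i0‖ ^ 2 ≤ M := le_ciInf hi0
    have h2 : 0 < ‖x i0‖ ^ 2 := by
      have h0 : 0 < ‖x i0‖ := norm_pos_iff.mpr (hx i0)
      positivity
    linarith
  set A1 : ℝ := ∑ r, ∑ s, |W r s| with hA1
  set R : ℝ := Real.sqrt ((n : ℝ) * A1 ^ 2 * S / M) with hR
  have hR0 : 0 ≤ R := Real.sqrt_nonneg _
  -- Frobenius ≤ l1 bound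
  have hFl1 : (∑ r, ∑ s, (W r s) ^ 2) ≤ A1 ^ 2 := by
    have h1 : (∑ r, ∑ s, (W r s) ^ 2) = ∑ r, ∑ s, |W r s| ^ 2 := by
      simp [sq_abs]
    rw [h1, hA1, ← Finset.sum_product', ← Finset.sum_product']
    exact Finset.sum_sq_le_sq_sum_of_nonneg (fun i _ => abs_nonneg _)
  -- derivative bound at each training point
  have hderiv : ∀ i, ‖fderiv ℝ f (x i)‖ ≤ R := by
    intro i
    have hnn : 0 < (n : ℝ) := by exact_mod_cast hn
    have hsum : ∑ j, ‖fderiv ℝ f (x j)‖ ^ 2 ≤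
        (n : ℝ) * ((∑ r, ∑ s, (W r s) ^ 2) * S / M) := by
      have := hB
      rw [one_div, inv_mul_le_iff₀ hnn] at this
      linarith [this]
    have hterm : ‖fderiv ℝ f (x i)‖ ^ 2 ≤ ∑ j, ‖fderiv ℝ f (x j)‖ ^ 2 :=
      Finset.single_le_sum (f := fun j => ‖fderiv ℝ f (x j)‖ ^ 2)
        (fun j _ => by positivity) (Finset.mem_univ i)
    have hle2 : ‖fderiv ℝ f (x i)‖ ^ 2 ≤ (n : ℝ) * A1 ^ 2 * S / M := by
      have h3 : (n : ℝ) * ((∑ r, ∑ s, (W r s) ^ 2) * S / M) ≤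
          (n : ℝ) * A1 ^ 2 * S / M := by
        rw [show (n : ℝ) * ((∑ r, ∑ s, (W r s) ^ 2) * S / M) =
          ((n : ℝ) * (∑ r, ∑ s, (W r s) ^ 2) * S) / M by ring,
          show (n : ℝ) * A1 ^ 2 * S / M = ((n : ℝ) * A1 ^ 2 * S) / M by ring]
        gcongr
      linarith
    calc ‖fderiv ℝ f (x i)‖ = Real.sqrt (‖fderiv ℝ f (x i)‖ ^ 2) := by
          rw [Real.sqrt_sq (norm_nonneg _)]
      _ ≤ R := Real.sqrt_le_sqrt hle2
  -- properties of ε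
  have hε1 : ε ≤ 1 := hε ▸ min_le_left _ _
  have hε0 : 0 ≤ ε := by
    rw [hε]
    apply le_min zero_le_one
    positivity
  have hεRL : ε * (R + L) ≤ 1 / 2 := by
    rcases eq_or_lt_of_le (by positivity : (0:ℝ) ≤ R + L) with h | h
    · rw [← h]; norm_num
    · have h2 : ε ≤ 1 / (2 * (R + L)) := hε ▸ min_le_right _ _
      rw [le_div_iff₀ (by linarith : (0:ℝ) < 2 * (R + L))] at h2
      nlinarith
  -- correct classification of covered points
  have hkey : ∀ q ∈ T, (∃ i, y i = q.2 ∧ ‖q.1 - x i‖ ≤ ε) →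
      (∀ j, f q.1 j ≤ f q.1 q.2) := by
    rintro ⟨u, c⟩ _ ⟨i, hyi, hdist⟩ j
    simp only at hyi hdist ⊢
    have htay := taylor_bound f hf L hL hlip u (x i)
    have hΔ : ‖f u - f (x i)‖ ≤ 1 / 2 := by
      have h1 : ‖f u - f (x i)‖ ≤
          ‖fderiv ℝ f (x i) (u - x i)‖ + L * ‖u - x i‖ ^ 2 := by
        calc ‖f u - f (x i)‖
            = ‖(f u - f (x i) - fderiv ℝ f (x i) (u - x i)) +
                fderiv ℝ f (x i) (u - x i)‖ := by
              congr 1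
              abel
          _ ≤ ‖f u - f (x i) - fderiv ℝ f (x i) (u - x i)‖ +
                ‖fderiv ℝ f (x i) (u - x i)‖ := norm_add_le _ _
          _ ≤ _ := by linarith
      have h2 : ‖fderiv ℝ f (x i) (u - x i)‖ ≤ R * ε := by
        calc ‖fderiv ℝ f (x i) (u - x i)‖ ≤
            ‖fderiv ℝ f (x i)‖ * ‖u - x i‖ :=
              (fderiv ℝ f (x i)).le_opNorm _
          _ ≤ R * ε := by
              apply mul_le_mul (hderiv i) hdist (norm_nonneg _) hR0
      have h3 : L * ‖u - x i‖ ^ 2 ≤ L * ε := by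
        have hsq : ‖u - x i‖ ^ 2 ≤ ε ^ 2 := by
          nlinarith [norm_nonneg (u - x i)]
        nlinarith [mul_le_mul_of_nonneg_left hsq hL,
          mul_nonneg (mul_nonneg hL hε0) (by linarith : (0:ℝ) ≤ 1 - ε)]
      calc ‖f u - f (x i)‖ ≤ R * ε + L * ε := by linarith
        _ = ε * (R + L) := by ring
        _ ≤ 1 / 2 := hεRL
    -- coordinatewise
    have hcoord : ∀ j', |f u j' - f (x i) j'| ≤ 1 / 2 := by
      intro j'
      have := coord_le_norm (f u - f (x i)) j'
      simp only [PiLp.sub_apply] at this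
      linarith
    rw [hinterp i] at hcoord
    by_cases hj : j = c
    · subst hj
      exact le_refl _
    · have hja : f u j ≤ 1 / 2 := by
        have := hcoord j
        rw [EuclideanSpace.single_apply] at this
        have hne : ¬ (j = y i) := by rw [hyi]; exact hj
        simp [hne] at this
        cases abs_le.mp this with
        | intro h1 h2 => linarith
      have hjb : (1 : ℝ) / 2 ≤ f u c := by
        have := hcoord c
        rw [EuclideanSpace.single_apply] at this
        have heq : c = y i := hyi.symm
        simp [heq] at this
        cases abs_le.mp this with
        | intro h1 h2 => rw [heq]; linarith
      exact le_trans hja hjb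
  -- conclude by subset of filters
  calc δ * T.card ≤
      (T.filter (fun q => ∃ i, y i = q.2 ∧ ‖q.1 - x i‖ ≤ ε)).card := hcover
    _ ≤ (T.filter (fun q => ∀ j, f q.1 j ≤ f q.1 q.2)).card := by
        apply Nat.cast_le.mpr
        apply Finset.card_le_card
        intro q hq
        rw [Finset.mem_filter] at hq ⊢
        exact ⟨hq.1, hkey q hq.1 hq.2⟩
end

section
/- Let n ≥ 1 and let z_1,…,z_n and z′_1,…,z′_n be vectors in ℝ^d, each of Euclidean norm 1. Then |log(∑_{i,j} ⟨z_i, z_j⟩²) − log(∑_{i,j} ⟨z′_i, z′_j⟩²)| ≤ 8·∑_{i=1}^n ‖z_i − z′_i‖₂. Equivalently, with G and G′ the Gram matrices G_{ij} = ⟨z_i,z_j⟩ and G′_{ij} = ⟨z′_i,z′_j⟩, one has |H₂(G) − H₂(G′)| ≤ 8·∑_{i=1}^n ‖z_i − z′_i‖₂. -/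
open scoped RealInnerProductSpace

lemma log_diff_le_aux {c x y : ℝ} (hc : 0 < c) (hx : c ≤ x) (hy : c ≤ y)
    (hxy : x ≤ y) : Real.log y - Real.log x ≤ (y - x) / c := by
  have hx0 : 0 < x := lt_of_lt_of_le hc hx
  have hy0 : 0 < y := lt_of_lt_of_le hc hy
  rw [show Real.log y - Real.log x = Real.log (y / x) from
    (Real.log_div hy0.ne' hx0.ne').symm]
  calc Real.log (y / x) ≤ y / x - 1 := Real.log_le_sub_one_of_pos (by positivity)
    _ = (y - x) / x := by field_simp
    _ ≤ (y - x) / c := by gcongr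

lemma log_diff_le {c a b : ℝ} (hc : 0 < c) (ha : c ≤ a) (hb : c ≤ b) :
    |Real.log a - Real.log b| ≤ |a - b| / c := by
  rcases le_total a b with h | h
  · rw [abs_sub_comm (Real.log a), abs_sub_comm a b,
      abs_of_nonneg (sub_nonneg.2 h), abs_of_nonneg (sub_nonneg.2
        (Real.log_le_log (lt_of_lt_of_le hc ha) h))]
    exact log_diff_le_aux hc ha hb h
  · rw [abs_of_nonneg (sub_nonneg.2 h), abs_of_nonneg (sub_nonneg.2
      (Real.log_le_log (lt_of_lt_of_le hc hb) h))]
    exact log_diff_le_aux hc hb ha h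

/-- entropy-difference lemma. For two families of unit vectors,
`|log ∑ᵢⱼ⟨zᵢ,zⱼ⟩² - log ∑ᵢⱼ⟨z'ᵢ,z'ⱼ⟩²| ≤ 8 ∑ᵢ ‖zᵢ - z'ᵢ‖`
(equivalently `|H₂(G) - H₂(G')| ≤ 8 ∑ᵢ ‖zᵢ - z'ᵢ‖`). -/
theorem statement9 {n d : ℕ} (hn : 1 ≤ n)
    (z z' : Fin n → EuclideanSpace ℝ (Fin d))
    (hz : ∀ i, ‖z i‖ = 1) (hz' : ∀ i, ‖z' i‖ = 1) :
    |Real.log (∑ i, ∑ j, ⟪z i, z j⟫ ^ 2) -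
        Real.log (∑ i, ∑ j, ⟪z' i, z' j⟫ ^ 2)| ≤
      8 * ∑ i, ‖z i - z' i‖ := by
  have hn0 : (0:ℝ) < n := by exact_mod_cast hn
  set D := ∑ i, ‖z i - z' i‖ with hD
  have hDnn : 0 ≤ D := Finset.sum_nonneg fun i _ => norm_nonneg _
  -- lower bounds on the sums
  have lower : ∀ (w : Fin n → EuclideanSpace ℝ (Fin d)), (∀ i, ‖w i‖ = 1) →
      (n:ℝ) ≤ ∑ i, ∑ j, ⟪w i, w j⟫ ^ 2 := by
    intro w hw
    calc (n:ℝ) = ∑ _i : Fin n, (1:ℝ) := by simp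
      _ ≤ ∑ i, ∑ j, ⟪w i, w j⟫ ^ 2 := by
        apply Finset.sum_le_sum
        intro i _
        have h1 : ⟪w i, w i⟫ ^ 2 = 1 := by
          rw [real_inner_self_eq_norm_sq, hw i]; norm_num
        calc (1:ℝ) = ⟪w i, w i⟫ ^ 2 := h1.symm
          _ ≤ ∑ j, ⟪w i, w j⟫ ^ 2 :=
            Finset.single_le_sum (f := fun j => ⟪w i, w j⟫ ^ 2)
              (fun j _ => sq_nonneg _) (Finset.mem_univ i)
  have hS := lower z hz
  have hS' := lower z' hz'
  -- entrywise bound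
  have key : ∀ i j, |⟪z i, z j⟫ ^ 2 - ⟪z' i, z' j⟫ ^ 2|
      ≤ 2 * (‖z i - z' i‖ + ‖z j - z' j‖) := by
    intro i j
    set a := ⟪z i, z j⟫
    set b := ⟪z' i, z' j⟫
    have ha : |a| ≤ 1 := by
      have := abs_real_inner_le_norm (z i) (z j)
      rwa [hz i, hz j, one_mul] at this
    have hb : |b| ≤ 1 := by
      have := abs_real_inner_le_norm (z' i) (z' j)
      rwa [hz' i, hz' j, one_mul] at this
    have hab : |a - b| ≤ ‖z i - z' i‖ + ‖z j - z' j‖ := by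
      have hdecomp : a - b = ⟪z i - z' i, z j⟫ + ⟪z' i, z j - z' j⟫ := by
        simp only [inner_sub_left, inner_sub_right, a, b]; ring
      rw [hdecomp]
      calc |⟪z i - z' i, z j⟫ + ⟪z' i, z j - z' j⟫|
          ≤ |⟪z i - z' i, z j⟫| + |⟪z' i, z j - z' j⟫| := abs_add_le _ _
        _ ≤ ‖z i - z' i‖ * ‖z j‖ + ‖z' i‖ * ‖z j - z' j‖ :=
            add_le_add (abs_real_inner_le_norm _ _) (abs_real_inner_le_norm _ _)
        _ = ‖z i - z' i‖ + ‖z j - z' j‖ := by rw [hz j, hz' i]; ring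
    calc |a ^ 2 - b ^ 2| = |a + b| * |a - b| := by
          rw [← abs_mul]; ring_nf
      _ ≤ 2 * (‖z i - z' i‖ + ‖z j - z' j‖) := by
          apply mul_le_mul
          · calc |a + b| ≤ |a| + |b| := abs_add_le _ _
              _ ≤ 2 := by linarith
          · exact hab
          · exact abs_nonneg _
          · norm_num
  -- bound on |S - S'|
  have hdiff : |(∑ i, ∑ j, ⟪z i, z j⟫ ^ 2) - ∑ i, ∑ j, ⟪z' i, z' j⟫ ^ 2|
      ≤ 4 * n * D := by
    calc |(∑ i, ∑ j, ⟪z i, z j⟫ ^ 2) - ∑ i, ∑ j, ⟪z' i, z' j⟫ ^ 2|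
        = |∑ i, ∑ j, (⟪z i, z j⟫ ^ 2 - ⟪z' i, z' j⟫ ^ 2)| := by
          rw [← Finset.sum_sub_distrib]
          congr 1
          exact Finset.sum_congr rfl fun i _ => (Finset.sum_sub_distrib _ _).symm
      _ ≤ ∑ i, ∑ j, |⟪z i, z j⟫ ^ 2 - ⟪z' i, z' j⟫ ^ 2| := by
          refine (Finset.abs_sum_le_sum_abs _ _).trans ?_
          exact Finset.sum_le_sum fun i _ => Finset.abs_sum_le_sum_abs _ _
      _ ≤ ∑ i, ∑ j, 2 * (‖z i - z' i‖ + ‖z j - z' j‖) := by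
          exact Finset.sum_le_sum fun i _ =>
            Finset.sum_le_sum fun j _ => key i j
      _ = 4 * n * D := by
          have h1 : ∀ i : Fin n, ∑ j, 2 * (‖z i - z' i‖ + ‖z j - z' j‖)
              = 2 * ((n : ℝ) * ‖z i - z' i‖ + D) := by
            intro i
            rw [← Finset.mul_sum, Finset.sum_add_distrib, Finset.sum_const,
              Finset.card_fin, nsmul_eq_mul, ← hD]
          simp only [h1]
          rw [← Finset.mul_sum, Finset.sum_add_distrib, ← Finset.mul_sum, ← hD,
            Finset.sum_const, Finset.card_fin, nsmul_eq_mul]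
          ring
  calc |Real.log (∑ i, ∑ j, ⟪z i, z j⟫ ^ 2) -
        Real.log (∑ i, ∑ j, ⟪z' i, z' j⟫ ^ 2)|
      ≤ |(∑ i, ∑ j, ⟪z i, z j⟫ ^ 2) - ∑ i, ∑ j, ⟪z' i, z' j⟫ ^ 2| / n :=
        log_diff_le hn0 hS hS'
    _ ≤ (4 * n * D) / n := by gcongr
    _ = 4 * D := by
        rw [show (4:ℝ) * n * D = (4 * D) * n by ring, mul_div_assoc,
          div_self hn0.ne', mul_one]
    _ ≤ 8 * D := by linarith
end

section
/- Let n ≥ 1 and let z⁽¹⁾_1,…,z⁽¹⁾_n, z⁽²⁾_1,…,z⁽²⁾_n and (z′)⁽¹⁾_1,…,(z′)⁽¹⁾_n, (z′)⁽²⁾_1,…,(z′)⁽²⁾_n be vectors in ℝ^d, each of Euclidean norm 1. Then |log(∑_{i,j} (⟨z⁽¹⁾_i, z⁽¹⁾_j⟩·⟨z⁽²⁾_i, z⁽²⁾_j⟩)²) − log(∑_{i,j} (⟨(z′)⁽¹⁾_i, (z′)⁽¹⁾_j⟩·⟨(z′)⁽²⁾_i, (z′)⁽²⁾_j⟩)²)|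 ≤ 8·∑_{k=1}^{2} ∑_{i=1}^{n} ‖z⁽ᵏ⁾_i − (z′)⁽ᵏ⁾_i‖₂. Equivalently, |H₂(G₁⊙G₂) − H₂(G′₁⊙G′₂)| ≤ 8·∑_{k=1}^{2} ∑_{i=1}^{n} ‖z⁽ᵏ⁾_i − (z′)⁽ᵏ⁾_i‖₂, where G_k and G′_k are the Gram matrices of the respective families and ⊙ is the Hadamard product. -/
open scoped RealInnerProductSpace

lemma st10_log_lip {c x y : ℝ} (hc : 0 < c) (hx : c ≤ x) (hy : c ≤ y) :
    |Real.log x - Real.log y| ≤ |x - y| / c := by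
  wlog h : y ≤ x generalizing x y
  · rw [abs_sub_comm, abs_sub_comm x y]; exact this hy hx (le_of_not_ge h)
  have hy0 : 0 < y := lt_of_lt_of_le hc hy
  have hx0 : 0 < x := lt_of_lt_of_le hc hx
  rw [abs_of_nonneg (by linarith : (0:ℝ) ≤ x - y),
      abs_of_nonneg (sub_nonneg.2 (Real.log_le_log hy0 h))]
  have h1 := Real.log_le_sub_one_of_pos (div_pos hx0 hy0)
  rw [Real.log_div hx0.ne' hy0.ne'] at h1
  have h2 : x / y - 1 = (x - y) / y := by field_simp
  have h3 : (x - y) / y ≤ (x - y) / c := by gcongr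
  linarith

lemma st10_inner_diff {d : ℕ} (a b a' b' : EuclideanSpace ℝ (Fin d))
    (ha : ‖a‖ = 1) (hb' : ‖b'‖ = 1) :
    |⟪a,b⟫ - ⟪a',b'⟫| ≤ ‖a - a'‖ + ‖b - b'‖ := by
  have h1 : ⟪a,b⟫ - ⟪a',b'⟫ = ⟪a, b - b'⟫ + ⟪a - a', b'⟫ := by
    simp only [inner_sub_left, inner_sub_right]; ring
  rw [h1]
  calc |⟪a, b - b'⟫ + ⟪a - a', b'⟫| ≤ |⟪a, b - b'⟫| + |⟪a - a', b'⟫| := abs_add_le _ _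
    _ ≤ ‖a‖ * ‖b - b'‖ + ‖a - a'‖ * ‖b'‖ := by
        gcongr <;> exact abs_real_inner_le_norm _ _
    _ = ‖b - b'‖ + ‖a - a'‖ := by rw [ha, hb']; ring
    _ = _ := by ring

lemma st10_sq_diff {a b a' b' : ℝ} (ha : |a| ≤ 1) (hb : |b| ≤ 1) (ha' : |a'| ≤ 1)
    (hb' : |b'| ≤ 1) (e f : ℝ) (he : |a - a'| ≤ e) (hf : |b - b'| ≤ f) :
    |(a * b) ^ 2 - (a' * b') ^ 2| ≤ 2 * (e + f) := by
  have h1 : |a * b - a' * b'| ≤ e + f := by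
    have h : a * b - a' * b' = (a - a') * b + a' * (b - b') := by ring
    rw [h]
    calc |(a - a') * b + a' * (b - b')|
        ≤ abs ((a - a') * b) + abs (a' * (b - b')) := abs_add_le _ _
      _ = |a - a'| * |b| + |a'| * |b - b'| := by rw [abs_mul, abs_mul]
      _ ≤ e * 1 + 1 * f :=
          add_le_add (mul_le_mul he hb (abs_nonneg _) (le_trans (abs_nonneg _) he))
            (mul_le_mul ha' hf (abs_nonneg _) zero_le_one)
      _ = e + f := by ring
  have h2 : |a * b + a' * b'| ≤ 2 := by
    calc |a * b + a' * b'| ≤ abs (a * b) + abs (a' * b') := abs_add_le _ _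
      _ = |a| * |b| + |a'| * |b'| := by rw [abs_mul, abs_mul]
      _ ≤ 1 * 1 + 1 * 1 :=
          add_le_add (mul_le_mul ha hb (abs_nonneg _) zero_le_one)
            (mul_le_mul ha' hb' (abs_nonneg _) zero_le_one)
      _ = 2 := by norm_num
  have heq : (a * b) ^ 2 - (a' * b') ^ 2 = (a * b - a' * b') * (a * b + a' * b') := by ring
  calc |(a * b) ^ 2 - (a' * b') ^ 2|
      = |a * b - a' * b'| * |a * b + a' * b'| := by rw [heq, abs_mul]
    _ ≤ (e + f) * 2 :=
        mul_le_mul h1 h2 (abs_nonneg _) (le_trans (abs_nonneg _) h1)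
    _ = 2 * (e + f) := by ring

/-- Hadamard-product entropy perturbation. For four families of
unit vectors, the difference of `log ∑ᵢⱼ (⟨z⁽¹⁾ᵢ,z⁽¹⁾ⱼ⟩·⟨z⁽²⁾ᵢ,z⁽²⁾ⱼ⟩)²` is
bounded by `8 ∑ₖ ∑ᵢ ‖z⁽ᵏ⁾ᵢ - (z′)⁽ᵏ⁾ᵢ‖`. -/
theorem statement10 {n d : ℕ} (hn : 1 ≤ n)
    (z1 z2 z1' z2' : Fin n → EuclideanSpace ℝ (Fin d))
    (hz1 : ∀ i, ‖z1 i‖ = 1) (hz2 : ∀ i, ‖z2 i‖ = 1)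
    (hz1' : ∀ i, ‖z1' i‖ = 1) (hz2' : ∀ i, ‖z2' i‖ = 1) :
    |Real.log (∑ i, ∑ j, (⟪z1 i, z1 j⟫ * ⟪z2 i, z2 j⟫) ^ 2) -
        Real.log (∑ i, ∑ j, (⟪z1' i, z1' j⟫ * ⟪z2' i, z2' j⟫) ^ 2)| ≤
      8 * ((∑ i, ‖z1 i - z1' i‖) + ∑ i, ‖z2 i - z2' i‖) := by
  set S := ∑ i, ∑ j, (⟪z1 i, z1 j⟫ * ⟪z2 i, z2 j⟫) ^ 2 with hSdef
  set S' := ∑ i, ∑ j, (⟪z1' i, z1' j⟫ * ⟪z2' i, z2' j⟫) ^ 2 with hS'def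
  set D1 := ∑ i, ‖z1 i - z1' i‖ with hD1
  set D2 := ∑ i, ‖z2 i - z2' i‖ with hD2
  have hD1n : 0 ≤ D1 := Finset.sum_nonneg fun i _ => norm_nonneg _
  have hD2n : 0 ≤ D2 := Finset.sum_nonneg fun i _ => norm_nonneg _
  have key : ∀ (w1 w2 : Fin n → EuclideanSpace ℝ (Fin d)),
      (∀ i, ‖w1 i‖ = 1) → (∀ i, ‖w2 i‖ = 1) →
      (n : ℝ) ≤ ∑ i, ∑ j, (⟪w1 i, w1 j⟫ * ⟪w2 i, w2 j⟫) ^ 2 := by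
    intro w1 w2 hw1 hw2
    have hdiag : ∀ i : Fin n, (1:ℝ) ≤ ∑ j, (⟪w1 i, w1 j⟫ * ⟪w2 i, w2 j⟫) ^ 2 := by
      intro i
      have h1 : (⟪w1 i, w1 i⟫ * ⟪w2 i, w2 i⟫ : ℝ) ^ 2 = 1 := by
        rw [real_inner_self_eq_norm_sq, real_inner_self_eq_norm_sq, hw1, hw2]; norm_num
      calc (1:ℝ) = (⟪w1 i, w1 i⟫ * ⟪w2 i, w2 i⟫) ^ 2 := h1.symm
        _ ≤ ∑ j, (⟪w1 i, w1 j⟫ * ⟪w2 i, w2 j⟫) ^ 2 :=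
            Finset.single_le_sum (f := fun j => (⟪w1 i, w1 j⟫ * ⟪w2 i, w2 j⟫ : ℝ) ^ 2)
              (fun j _ => sq_nonneg _) (Finset.mem_univ i)
    calc (n:ℝ) = ∑ _i : Fin n, (1:ℝ) := by simp
      _ ≤ _ := Finset.sum_le_sum fun i _ => hdiag i
  have hS : (n:ℝ) ≤ S := key z1 z2 hz1 hz2
  have hS' : (n:ℝ) ≤ S' := key z1' z2' hz1' hz2'
  have hn0 : (0:ℝ) < n := by exact_mod_cast hn
  have habs : ∀ (u v : EuclideanSpace ℝ (Fin d)), ‖u‖ = 1 → ‖v‖ = 1 → |⟪u,v⟫| ≤ 1 := by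
    intro u v hu hv
    calc |⟪u,v⟫| ≤ ‖u‖ * ‖v‖ := abs_real_inner_le_norm _ _
      _ = 1 := by rw [hu, hv]; ring
  have hdiff : |S - S'| ≤ 4 * n * (D1 + D2) := by
    have hterm : ∀ i j : Fin n,
        |(⟪z1 i, z1 j⟫ * ⟪z2 i, z2 j⟫)^2 - (⟪z1' i, z1' j⟫ * ⟪z2' i, z2' j⟫)^2|
          ≤ 2*((‖z1 i - z1' i‖ + ‖z1 j - z1' j‖) + (‖z2 i - z2' i‖ + ‖z2 j - z2' j‖)) :=
      fun i j =>
        st10_sq_diff (habs _ _ (hz1 i) (hz1 j)) (habs _ _ (hz2 i) (hz2 j))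
          (habs _ _ (hz1' i) (hz1' j)) (habs _ _ (hz2' i) (hz2' j)) _ _
          (st10_inner_diff _ _ _ _ (hz1 i) (hz1' j))
          (st10_inner_diff _ _ _ _ (hz2 i) (hz2' j))
    have hsub : S - S' = ∑ i, ∑ j, ((⟪z1 i, z1 j⟫ * ⟪z2 i, z2 j⟫)^2
        - (⟪z1' i, z1' j⟫ * ⟪z2' i, z2' j⟫)^2) := by
      rw [hSdef, hS'def, ← Finset.sum_sub_distrib]
      exact Finset.sum_congr rfl fun i _ => by rw [Finset.sum_sub_distrib]
    calc |S - S'| = |∑ i, ∑ j, ((⟪z1 i, z1 j⟫ * ⟪z2 i, z2 j⟫)^2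
            - (⟪z1' i, z1' j⟫ * ⟪z2' i, z2' j⟫)^2)| := by rw [hsub]
      _ ≤ ∑ i, ∑ j, |(⟪z1 i, z1 j⟫ * ⟪z2 i, z2 j⟫)^2
            - (⟪z1' i, z1' j⟫ * ⟪z2' i, z2' j⟫)^2| :=
          (Finset.abs_sum_le_sum_abs _ _).trans
            (Finset.sum_le_sum fun i _ => Finset.abs_sum_le_sum_abs _ _)
      _ ≤ ∑ i, ∑ j, 2*((‖z1 i - z1' i‖ + ‖z1 j - z1' j‖)
            + (‖z2 i - z2' i‖ + ‖z2 j - z2' j‖)) :=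
          Finset.sum_le_sum fun i _ => Finset.sum_le_sum fun j _ => hterm i j
      _ = 4 * n * (D1 + D2) := by
          simp only [mul_add, Finset.sum_add_distrib, Finset.sum_const,
            Finset.card_univ, Fintype.card_fin, nsmul_eq_mul, ← Finset.mul_sum]
          ring
  calc |Real.log S - Real.log S'| ≤ |S - S'| / n := st10_log_lip hn0 hS hS'
    _ ≤ (4 * n * (D1 + D2)) / n := by gcongr
    _ = 4 * (D1 + D2) := by field_simp
    _ ≤ 8 * (D1 + D2) := by linarith
end

section
/- Let n ≥ 1 and let z⁽¹⁾_1,…,z⁽¹⁾_n, z⁽²⁾_1,…,z⁽²⁾_n and (z′)⁽¹⁾_1,…,(z′)⁽¹⁾_n, (z′)⁽²⁾_1,…,(z′)⁽²⁾_n be vectors in ℝ^d, each of Euclidean norm 1, with Gram matrices G₁, G₂, G′₁, G′₂ (so (G_k)_{ij} = ⟨z⁽ᵏ⁾_i, z⁽ᵏ⁾_j⟩ and likewise for G′_k). Then |I₂(G₁;G₂) − I₂(G′₁;G′₂)| ≤ 16·∑_{k=1}^{2} ∑_{i=1}^{n} ‖z⁽ᵏ⁾_i − (z′)⁽ᵏ⁾_i‖₂.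 -/
open scoped RealInnerProductSpace

/-- Order-2 matrix (Rényi) entropy `H₂(K) = -log(tr((n⁻¹K)²))`. -/
noncomputable def H2 {n : ℕ} (K : Matrix (Fin n) (Fin n) ℝ) : ℝ :=
  -Real.log (Matrix.trace (((n : ℝ)⁻¹ • K) ^ 2))

/-- Gram matrix of a family of vectors. -/
noncomputable def gram {n d : ℕ} (z : Fin n → EuclideanSpace ℝ (Fin d)) :
    Matrix (Fin n) (Fin n) ℝ :=
  Matrix.of fun i j => ⟪z i, z j⟫

/-- Order-2 matrix mutual information `I₂(R₁;R₂) = H₂(R₁) + H₂(R₂) - H₂(R₁⊙R₂)`. -/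
noncomputable def I2 {n : ℕ} (R₁ R₂ : Matrix (Fin n) (Fin n) ℝ) : ℝ :=
  H2 R₁ + H2 R₂ - H2 (Matrix.hadamard R₁ R₂)


-- log Lipschitz lemma
lemma log_lip {a b c : ℝ} (hc : 0 < c) (ha : c ≤ a) (hb : c ≤ b) :
    |Real.log a - Real.log b| ≤ |a - b| / c := by
  wlog h : b ≤ a generalizing a b
  · rw [abs_sub_comm, abs_sub_comm a b]; exact this hb ha (le_of_not_ge h)
  have hbpos : 0 < b := lt_of_lt_of_le hc hb
  have hapos : 0 < a := lt_of_lt_of_le hc ha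
  rw [abs_of_nonneg (sub_nonneg.2 (Real.log_le_log hbpos h)),
      abs_of_nonneg (sub_nonneg.2 h)]
  have h1 : Real.log a - Real.log b = Real.log (a / b) := (Real.log_div hapos.ne' hbpos.ne').symm
  rw [h1]
  have h2 : Real.log (a / b) ≤ a / b - 1 := Real.log_le_sub_one_of_pos (div_pos hapos hbpos)
  have h3 : a / b - 1 = (a - b) / b := by field_simp
  calc Real.log (a / b) ≤ (a - b) / b := by rw [← h3]; exact h2
    _ ≤ (a - b) / c := div_le_div_of_nonneg_left (sub_nonneg.2 h) hc hb

lemma sq_diff_le {a b : ℝ} (ha : |a| ≤ 1) (hb : |b| ≤ 1) :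
    |a ^ 2 - b ^ 2| ≤ 2 * |a - b| := by
  have h : a ^ 2 - b ^ 2 = (a + b) * (a - b) := by ring
  rw [h, abs_mul]
  have : |a + b| ≤ 2 := (abs_add_le a b).trans (by linarith)
  exact mul_le_mul_of_nonneg_right this (abs_nonneg _)

lemma prod_diff_le {a b a' b' : ℝ} (hb : |b| ≤ 1) (ha' : |a'| ≤ 1) :
    |a * b - a' * b'| ≤ |a - a'| + |b - b'| := by
  have h : a * b - a' * b' = (a - a') * b + a' * (b - b') := by ring
  rw [h]
  calc |(a - a') * b + a' * (b - b')| ≤ |(a - a') * b| + |a' * (b - b')| := abs_add_le _ _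
    _ ≤ |a - a'| * 1 + 1 * |b - b'| := by
        rw [abs_mul, abs_mul]
        exact add_le_add (mul_le_mul_of_nonneg_left hb (abs_nonneg _))
          (mul_le_mul_of_nonneg_right ha' (abs_nonneg _))
    _ = |a - a'| + |b - b'| := by ring


lemma H2_diff {n : ℕ} (hn : 1 ≤ n) (K K' : Matrix (Fin n) (Fin n) ℝ)
    (hs : ∀ i j, K j i = K i j) (hs' : ∀ i j, K' j i = K' i j)
    (hd : ∀ i, K i i = 1) (hd' : ∀ i, K' i i = 1)
    (hb : ∀ i j, |K i j| ≤ 1) (hb' : ∀ i j, |K' i j| ≤ 1) :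
    |H2 K - H2 K'| ≤ 2 * (n : ℝ)⁻¹ * ∑ i, ∑ j, |K i j - K' i j| := by
  have hnpos : (0 : ℝ) < n := by exact_mod_cast Nat.lt_of_lt_of_le Nat.zero_lt_one hn
  have hninv : (0 : ℝ) < (n : ℝ)⁻¹ := inv_pos.2 hnpos
  have htr : ∀ M : Matrix (Fin n) (Fin n) ℝ, (∀ i j, M j i = M i j) →
      Matrix.trace (((n : ℝ)⁻¹ • M) ^ 2) = ((n : ℝ)⁻¹) ^ 2 * ∑ i, ∑ j, (M i j) ^ 2 := by
    intro M hM
    rw [smul_pow, Matrix.trace_smul, smul_eq_mul]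
    congr 1
    rw [pow_two M]
    simp only [Matrix.trace, Matrix.diag, Matrix.mul_apply]
    refine Finset.sum_congr rfl fun i _ => Finset.sum_congr rfl fun j _ => ?_
    rw [hM, pow_two]
  have hlow : ∀ M : Matrix (Fin n) (Fin n) ℝ, (∀ i, M i i = 1) →
      (n : ℝ)⁻¹ ≤ ((n : ℝ)⁻¹) ^ 2 * ∑ i, ∑ j, (M i j) ^ 2 := by
    intro M hM
    have h1 : (n : ℝ) ≤ ∑ i, ∑ j, (M i j) ^ 2 := by
      have h2 : ∀ i : Fin n, (1 : ℝ) ≤ ∑ j, (M i j) ^ 2 := fun i => by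
        have := Finset.single_le_sum (f := fun j => (M i j) ^ 2)
          (fun j _ => sq_nonneg _) (Finset.mem_univ i)
        simpa [hM i] using this
      calc (n : ℝ) = ∑ _i : Fin n, (1 : ℝ) := by simp
        _ ≤ _ := Finset.sum_le_sum fun i _ => h2 i
    calc (n : ℝ)⁻¹ = ((n : ℝ)⁻¹) ^ 2 * n := by field_simp
      _ ≤ _ := by gcongr
  rw [H2, H2, htr K hs, htr K' hs']
  set A := ((n : ℝ)⁻¹) ^ 2 * ∑ i, ∑ j, (K i j) ^ 2 with hA
  set A' := ((n : ℝ)⁻¹) ^ 2 * ∑ i, ∑ j, (K' i j) ^ 2 with hA'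
  have key : |(-Real.log A) - (-Real.log A')| = |Real.log A - Real.log A'| := by
    rw [abs_sub_comm]; ring_nf
  rw [key]
  calc |Real.log A - Real.log A'| ≤ |A - A'| / (n : ℝ)⁻¹ :=
        log_lip hninv (hlow K hd) (hlow K' hd')
    _ = (n : ℝ) * |A - A'| := by
        rw [div_eq_mul_inv, inv_inv]; ring
    _ ≤ (n : ℝ) * (((n : ℝ)⁻¹) ^ 2 * ∑ i, ∑ j, 2 * |K i j - K' i j|) := by
        gcongr (n : ℝ) * ?_
        rw [hA, hA', ← mul_sub, abs_mul, abs_of_nonneg (by positivity : (0:ℝ) ≤ ((n:ℝ)⁻¹)^2)]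
        gcongr ((n : ℝ)⁻¹) ^ 2 * ?_
        rw [← Finset.sum_sub_distrib]
        calc |∑ i, (∑ j, (K i j) ^ 2 - ∑ j, (K' i j) ^ 2)| ≤
              ∑ i, |∑ j, (K i j) ^ 2 - ∑ j, (K' i j) ^ 2| := Finset.abs_sum_le_sum_abs _ _
          _ ≤ ∑ i, ∑ j, 2 * |K i j - K' i j| := by
              refine Finset.sum_le_sum fun i _ => ?_
              rw [← Finset.sum_sub_distrib]
              calc |∑ j, ((K i j) ^ 2 - (K' i j) ^ 2)| ≤
                    ∑ j, |(K i j) ^ 2 - (K' i j) ^ 2| := Finset.abs_sum_le_sum_abs _ _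
                _ ≤ ∑ j, 2 * |K i j - K' i j| :=
                    Finset.sum_le_sum fun j _ => sq_diff_le (hb i j) (hb' i j)
    _ = 2 * (n : ℝ)⁻¹ * ∑ i, ∑ j, |K i j - K' i j| := by
        have hc : (n : ℝ) * ((n : ℝ)⁻¹) ^ 2 = (n : ℝ)⁻¹ := by
          rw [pow_two, ← mul_assoc, mul_inv_cancel₀ hnpos.ne', one_mul]
        rw [← mul_assoc, hc]
        simp_rw [← Finset.mul_sum]
        ring


lemma inner_diff {d : ℕ} (u v u' v' : EuclideanSpace ℝ (Fin d))
    (hv : ‖v‖ = 1) (hu' : ‖u'‖ = 1) :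
    |⟪u, v⟫ - ⟪u', v'⟫| ≤ ‖u - u'‖ + ‖v - v'‖ := by
  have h : ⟪u, v⟫ - ⟪u', v'⟫ = ⟪u - u', v⟫ + ⟪u', v - v'⟫ := by
    rw [inner_sub_left, inner_sub_right]; ring
  rw [h]
  calc |⟪u - u', v⟫ + ⟪u', v - v'⟫| ≤ |⟪u - u', v⟫| + |⟪u', v - v'⟫| := abs_add_le _ _
    _ ≤ ‖u - u'‖ * ‖v‖ + ‖u'‖ * ‖v - v'‖ :=
        add_le_add (abs_real_inner_le_norm _ _) (abs_real_inner_le_norm _ _)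
    _ = ‖u - u'‖ + ‖v - v'‖ := by rw [hv, hu']; ring

/-- mutual-information difference bound:
`|I₂(G₁;G₂) - I₂(G′₁;G′₂)| ≤ 16 ∑ₖ ∑ᵢ ‖z⁽ᵏ⁾ᵢ - (z′)⁽ᵏ⁾ᵢ‖`. -/
theorem statement11 {n d : ℕ} (hn : 1 ≤ n)
    (z1 z2 z1' z2' : Fin n → EuclideanSpace ℝ (Fin d))
    (hz1 : ∀ i, ‖z1 i‖ = 1) (hz2 : ∀ i, ‖z2 i‖ = 1)
    (hz1' : ∀ i, ‖z1' i‖ = 1) (hz2' : ∀ i, ‖z2' i‖ = 1) :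
    |I2 (gram z1) (gram z2) - I2 (gram z1') (gram z2')| ≤
      16 * ((∑ i, ‖z1 i - z1' i‖) + ∑ i, ‖z2 i - z2' i‖) := by
  simp only [I2]
  have hnpos : (0 : ℝ) < n := by exact_mod_cast Nat.lt_of_lt_of_le Nat.zero_lt_one hn
  set D1 := ∑ i, ‖z1 i - z1' i‖ with hD1def
  set D2 := ∑ i, ‖z2 i - z2' i‖ with hD2def
  have hD1 : 0 ≤ D1 := Finset.sum_nonneg fun i _ => norm_nonneg _
  have hD2 : 0 ≤ D2 := Finset.sum_nonneg fun i _ => norm_nonneg _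
  have gsymm : ∀ (z : Fin n → EuclideanSpace ℝ (Fin d)) (i j : Fin n),
      gram z j i = gram z i j := fun z i j => real_inner_comm (z i) (z j)
  have gdiag : ∀ (z : Fin n → EuclideanSpace ℝ (Fin d)), (∀ i, ‖z i‖ = 1) →
      ∀ i, gram z i i = 1 := by
    intro z hz i
    show ⟪z i, z i⟫ = 1
    rw [real_inner_self_eq_norm_sq, hz i]; norm_num
  have gbd : ∀ (z : Fin n → EuclideanSpace ℝ (Fin d)), (∀ i, ‖z i‖ = 1) →
      ∀ i j, |gram z i j| ≤ 1 := by
    intro z hz i j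
    have := abs_real_inner_le_norm (z i) (z j)
    simpa [gram, hz i, hz j] using this
  have gdiff : ∀ (z z' : Fin n → EuclideanSpace ℝ (Fin d)), (∀ i, ‖z i‖ = 1) →
      (∀ i, ‖z' i‖ = 1) → ∀ i j, |gram z i j - gram z' i j| ≤ ‖z i - z' i‖ + ‖z j - z' j‖ :=
    fun z z' hz hz' i j => inner_diff _ _ _ _ (hz j) (hz' i)
  have sum2 : ∀ f : Fin n → ℝ, ∑ i : Fin n, ∑ j : Fin n, (f i + f j) =
      2 * ((n : ℝ) * ∑ i, f i) := by
    intro f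
    simp only [Finset.sum_add_distrib, Finset.sum_const, Finset.card_univ, Fintype.card_fin,
      nsmul_eq_mul, ← Finset.mul_sum]
    ring
  have hfact : 2 * (n : ℝ)⁻¹ * (2 * ((n : ℝ) * D1)) = 4 * D1 := by
    field_simp; ring
  have hfact2 : 2 * (n : ℝ)⁻¹ * (2 * ((n : ℝ) * D2)) = 4 * D2 := by
    field_simp; ring
  -- bound for gram z1 vs gram z1'
  have bnd : ∀ (z z' : Fin n → EuclideanSpace ℝ (Fin d)) (hz : ∀ i, ‖z i‖ = 1)
      (hz' : ∀ i, ‖z' i‖ = 1),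
      |H2 (gram z) - H2 (gram z')| ≤ 4 * ((n : ℝ)⁻¹ * ((n : ℝ) * ∑ i, ‖z i - z' i‖)) := by
    intro z z' hz hz'
    have h := H2_diff hn (gram z) (gram z') (gsymm z) (gsymm z') (gdiag z hz) (gdiag z' hz')
      (gbd z hz) (gbd z' hz')
    refine h.trans ?_
    have hsum : ∑ i, ∑ j, |gram z i j - gram z' i j| ≤
        2 * ((n : ℝ) * ∑ i, ‖z i - z' i‖) := by
      rw [← sum2 (fun i => ‖z i - z' i‖)]
      exact Finset.sum_le_sum fun i _ => Finset.sum_le_sum fun j _ => gdiff z z' hz hz' i j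
    calc 2 * (n : ℝ)⁻¹ * ∑ i, ∑ j, |gram z i j - gram z' i j| ≤
          2 * (n : ℝ)⁻¹ * (2 * ((n : ℝ) * ∑ i, ‖z i - z' i‖)) := by
          gcongr
      _ = 4 * ((n : ℝ)⁻¹ * ((n : ℝ) * ∑ i, ‖z i - z' i‖)) := by ring
  have hninvn : (n : ℝ)⁻¹ * (n : ℝ) = 1 := inv_mul_cancel₀ hnpos.ne'
  have hcan : ∀ x : ℝ, (n : ℝ)⁻¹ * ((n : ℝ) * x) = x := fun x => by
    rw [← mul_assoc, hninvn, one_mul]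
  have b1 : |H2 (gram z1) - H2 (gram z1')| ≤ 4 * D1 :=
    (bnd z1 z1' hz1 hz1').trans_eq (by rw [hcan])
  have b2 : |H2 (gram z2) - H2 (gram z2')| ≤ 4 * D2 :=
    (bnd z2 z2' hz2 hz2').trans_eq (by rw [hcan])
  -- hadamard bound
  have b3 : |H2 (Matrix.hadamard (gram z1) (gram z2)) -
      H2 (Matrix.hadamard (gram z1') (gram z2'))| ≤ 4 * (D1 + D2) := by
    set H := Matrix.hadamard (gram z1) (gram z2) with hH
    set H' := Matrix.hadamard (gram z1') (gram z2') with hH'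
    have hsymm : ∀ i j, H j i = H i j := fun i j => by
      simp [hH, Matrix.hadamard_apply, gsymm z1 i j, gsymm z2 i j]
    have hsymm' : ∀ i j, H' j i = H' i j := fun i j => by
      simp [hH', Matrix.hadamard_apply, gsymm z1' i j, gsymm z2' i j]
    have hdiag : ∀ i, H i i = 1 := fun i => by
      simp [hH, Matrix.hadamard_apply, gdiag z1 hz1 i, gdiag z2 hz2 i]
    have hdiag' : ∀ i, H' i i = 1 := fun i => by
      simp [hH', Matrix.hadamard_apply, gdiag z1' hz1' i, gdiag z2' hz2' i]
    have hbd : ∀ i j, |H i j| ≤ 1 := fun i j => by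
      rw [hH, Matrix.hadamard_apply, abs_mul]
      exact mul_le_one₀ (gbd z1 hz1 i j) (abs_nonneg _) (gbd z2 hz2 i j)
    have hbd' : ∀ i j, |H' i j| ≤ 1 := fun i j => by
      rw [hH', Matrix.hadamard_apply, abs_mul]
      exact mul_le_one₀ (gbd z1' hz1' i j) (abs_nonneg _) (gbd z2' hz2' i j)
    have h := H2_diff hn H H' hsymm hsymm' hdiag hdiag' hbd hbd'
    refine h.trans ?_
    have hentry : ∀ i j, |H i j - H' i j| ≤
        (‖z1 i - z1' i‖ + ‖z1 j - z1' j‖) + (‖z2 i - z2' i‖ + ‖z2 j - z2' j‖) := by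
      intro i j
      rw [hH, hH', Matrix.hadamard_apply, Matrix.hadamard_apply]
      exact (prod_diff_le (gbd z2 hz2 i j) (gbd z1' hz1' i j)).trans
        (add_le_add (gdiff z1 z1' hz1 hz1' i j) (gdiff z2 z2' hz2 hz2' i j))
    have hsum : ∑ i, ∑ j, |H i j - H' i j| ≤ 2 * ((n : ℝ) * D1) + 2 * ((n : ℝ) * D2) := by
      calc ∑ i, ∑ j, |H i j - H' i j| ≤
          ∑ i : Fin n, ∑ j : Fin n, ((‖z1 i - z1' i‖ + ‖z1 j - z1' j‖) +
            (‖z2 i - z2' i‖ + ‖z2 j - z2' j‖)) :=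
          Finset.sum_le_sum fun i _ => Finset.sum_le_sum fun j _ => hentry i j
        _ = 2 * ((n : ℝ) * D1) + 2 * ((n : ℝ) * D2) := by
          simp only [Finset.sum_add_distrib, Finset.sum_const, Finset.card_univ,
            Fintype.card_fin, nsmul_eq_mul, ← Finset.mul_sum]
          rw [← hD1def, ← hD2def]
          ring
    calc 2 * (n : ℝ)⁻¹ * ∑ i, ∑ j, |H i j - H' i j| ≤
          2 * (n : ℝ)⁻¹ * (2 * ((n : ℝ) * D1) + 2 * ((n : ℝ) * D2)) := by
          gcongr
      _ = 4 * ((n : ℝ)⁻¹ * (n : ℝ)) * (D1 + D2) := by ring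
      _ = 4 * (D1 + D2) := by rw [hninvn]; ring
  have h : (H2 (gram z1) + H2 (gram z2) - H2 (Matrix.hadamard (gram z1) (gram z2))) -
      (H2 (gram z1') + H2 (gram z2') - H2 (Matrix.hadamard (gram z1') (gram z2'))) =
      (H2 (gram z1) - H2 (gram z1')) + (H2 (gram z2) - H2 (gram z2')) +
      (H2 (Matrix.hadamard (gram z1') (gram z2')) -
        H2 (Matrix.hadamard (gram z1) (gram z2))) := by ring
  rw [h]
  have tri := (abs_add_le ((H2 (gram z1) - H2 (gram z1')) + (H2 (gram z2) - H2 (gram z2')))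
    (H2 (Matrix.hadamard (gram z1') (gram z2')) -
      H2 (Matrix.hadamard (gram z1) (gram z2)))).trans
    (add_le_add (abs_add_le _ _) le_rfl)
  have b3' : |H2 (Matrix.hadamard (gram z1') (gram z2')) -
      H2 (Matrix.hadamard (gram z1) (gram z2))| ≤ 4 * (D1 + D2) := by
    rw [abs_sub_comm]; exact b3
  linarith
end

section
/- Let n ≥ 1 and let z_1,…,z_n and z′_1,…,z′_n be vectors in ℝ^d, each of Euclidean norm 1. Then |∑_{i,j} ⟨z_i, z_j⟩² − ∑_{i,j} ⟨z′_i, z′_j⟩²| ≤ 8·n·∑_{i=1}^n ‖z_i − z′_i‖₂. -/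
open scoped RealInnerProductSpace

/-- squared-Frobenius-norm perturbation of Gram matrices of unit
vectors: `|∑ᵢⱼ⟨zᵢ,zⱼ⟩² - ∑ᵢⱼ⟨z'ᵢ,z'ⱼ⟩²| ≤ 8·n·∑ᵢ ‖zᵢ - z'ᵢ‖`. -/
theorem statement17 {n d : ℕ} (hn : 1 ≤ n)
    (z z' : Fin n → EuclideanSpace ℝ (Fin d))
    (hz : ∀ i, ‖z i‖ = 1) (hz' : ∀ i, ‖z' i‖ = 1) :
    |(∑ i, ∑ j, ⟪z i, z j⟫ ^ 2) - ∑ i, ∑ j, ⟪z' i, z' j⟫ ^ 2| ≤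
      8 * n * ∑ i, ‖z i - z' i‖ := by
  have key : ∀ i j : Fin n, |⟪z i, z j⟫ ^ 2 - ⟪z' i, z' j⟫ ^ 2| ≤
      2 * (‖z i - z' i‖ + ‖z j - z' j‖) := by
    intro i j
    have h1 : |⟪z i, z j⟫| ≤ 1 := by
      have := abs_real_inner_le_norm (z i) (z j)
      simpa [hz i, hz j] using this
    have h2 : |⟪z' i, z' j⟫| ≤ 1 := by
      have := abs_real_inner_le_norm (z' i) (z' j)
      simpa [hz' i, hz' j] using this
    have hdiff : |⟪z i, z j⟫ - ⟪z' i, z' j⟫| ≤ ‖z i - z' i‖ + ‖z j - z' j‖ := by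
      have heq : ⟪z i, z j⟫ - ⟪z' i, z' j⟫ =
          ⟪z i - z' i, z j⟫ + ⟪z' i, z j - z' j⟫ := by
        simp [inner_sub_left, inner_sub_right]
      rw [heq]
      calc |⟪z i - z' i, z j⟫ + ⟪z' i, z j - z' j⟫|
          ≤ |⟪z i - z' i, z j⟫| + |⟪z' i, z j - z' j⟫| := abs_add_le _ _
        _ ≤ ‖z i - z' i‖ * ‖z j‖ + ‖z' i‖ * ‖z j - z' j‖ :=
            add_le_add (abs_real_inner_le_norm _ _) (abs_real_inner_le_norm _ _)
        _ = ‖z i - z' i‖ + ‖z j - z' j‖ := by rw [hz j, hz' i]; ring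
    have hfact : ⟪z i, z j⟫ ^ 2 - ⟪z' i, z' j⟫ ^ 2 =
        (⟪z i, z j⟫ - ⟪z' i, z' j⟫) * (⟪z i, z j⟫ + ⟪z' i, z' j⟫) := by ring
    rw [hfact, abs_mul]
    have hsum : |⟪z i, z j⟫ + ⟪z' i, z' j⟫| ≤ 2 := by
      calc |⟪z i, z j⟫ + ⟪z' i, z' j⟫| ≤ |⟪z i, z j⟫| + |⟪z' i, z' j⟫| := abs_add_le _ _
        _ ≤ 2 := by linarith
    calc |⟪z i, z j⟫ - ⟪z' i, z' j⟫| * |⟪z i, z j⟫ + ⟪z' i, z' j⟫|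
        ≤ (‖z i - z' i‖ + ‖z j - z' j‖) * 2 :=
          mul_le_mul hdiff hsum (abs_nonneg _) (by positivity)
      _ = 2 * (‖z i - z' i‖ + ‖z j - z' j‖) := by ring
  calc |(∑ i, ∑ j, ⟪z i, z j⟫ ^ 2) - ∑ i, ∑ j, ⟪z' i, z' j⟫ ^ 2|
      = |∑ i, ∑ j, (⟪z i, z j⟫ ^ 2 - ⟪z' i, z' j⟫ ^ 2)| := by
        rw [← Finset.sum_sub_distrib]
        congr 1
        exact Finset.sum_congr rfl fun i _ => (Finset.sum_sub_distrib _ _).symm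
    _ ≤ ∑ i, ∑ j, |⟪z i, z j⟫ ^ 2 - ⟪z' i, z' j⟫ ^ 2| := by
        calc |∑ i, ∑ j, (⟪z i, z j⟫ ^ 2 - ⟪z' i, z' j⟫ ^ 2)|
            ≤ ∑ i, |∑ j, (⟪z i, z j⟫ ^ 2 - ⟪z' i, z' j⟫ ^ 2)| :=
              Finset.abs_sum_le_sum_abs _ _
          _ ≤ ∑ i, ∑ j, |⟪z i, z j⟫ ^ 2 - ⟪z' i, z' j⟫ ^ 2| :=
              Finset.sum_le_sum fun i _ => Finset.abs_sum_le_sum_abs _ _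
    _ ≤ ∑ i, ∑ j, 2 * (‖z i - z' i‖ + ‖z j - z' j‖) :=
        Finset.sum_le_sum fun i _ => Finset.sum_le_sum fun j _ => key i j
    _ = 4 * n * ∑ i, ‖z i - z' i‖ := by
        simp only [mul_add, Finset.sum_add_distrib, Finset.sum_const,
          Finset.card_univ, Fintype.card_fin, nsmul_eq_mul, ← Finset.mul_sum,
          ← Finset.sum_mul]
        ring
    _ ≤ 8 * n * ∑ i, ‖z i - z' i‖ := by
        have hS : (0:ℝ) ≤ ∑ i, ‖z i - z' i‖ :=
          Finset.sum_nonneg fun i _ => norm_nonneg _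
        nlinarith [hS, (Nat.one_le_cast.mpr hn : (1:ℝ) ≤ n)]
end
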